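/- Let f : [0,1] → [0,1] be a homeomorphism whose set of non-wandering points is finite. Then the polynomial entropy of the induced map C(f) on the hyperspace C([0,1]) of subcontinua of [0,1] equals 2. -/

import Mathlib

open Filter Topology TopologicalSpace Set
open scoped ENNReal

/-- The dynamic distance `d_n^f(x,y) = max_{0 ≤ k ≤ n-1} d(f^k x, f^k y)`. -/
noncomputable def dynDist {X : Type*} [MetricSpace X] (f : X → X) (n : ℕ) (x y : X) : ℝ :=
  ((Finset.range n).sup fun k => nndist (f^[k] x) (f^[k] y) : NNReal)

/-- A finite set `E` is `(n,ε)`-separated for `f`. -/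
def IsDynSeparated {X : Type*} [MetricSpace X] (f : X → X) (n : ℕ) (ε : ℝ) (E : Finset X) :
    Prop :=
  ∀ x ∈ E, ∀ y ∈ E, x ≠ y → ε ≤ dynDist f n x y

/-- `S(n,ε;Y)`: the maximal cardinality of an `(n,ε)`-separated subset of `Y`. -/
noncomputable def maxSep {X : Type*} [MetricSpace X] (f : X → X) (Y : Set X) (n : ℕ) (ε : ℝ) :
    ℕ :=
  sSup {m : ℕ | ∃ E : Finset X, ↑E ⊆ Y ∧ E.card = m ∧ IsDynSeparated f n ε E}

/-- The polynomial entropy `h_pol(f;Y)`.  Since `ε ↦ S(n,ε;Y)` is nonincreasing, the limit as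
`ε → 0` of the `limsup` coincides with the supremum over `ε > 0`. -/
noncomputable def polEnt {X : Type*} [MetricSpace X] (f : X → X) (Y : Set X) : ℝ≥0∞ :=
  ⨆ (ε : ℝ) (_ : 0 < ε),
    Filter.atTop.limsup fun n : ℕ =>
      ENNReal.ofReal (Real.log (maxSep f Y n ε) / Real.log n)

/-- The set of non-wandering points of `f`. -/
def nonWandering {X : Type*} [TopologicalSpace X] (f : X → X) : Set X :=
  {p | ∀ U ∈ nhds p, ∃ n : ℕ, 1 ≤ n ∧ (f^[n] '' U ∩ U).Nonempty}

/-- The induced map `2^f` on the hyperspace of nonempty closed (= compact) subsets of a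
compact metric space. -/
noncomputable def induced2 {X : Type*} [TopologicalSpace X] (f : X → X) (hf : Continuous f) :
    NonemptyCompacts X → NonemptyCompacts X :=
  fun A => ⟨⟨f '' A, A.isCompact.image hf⟩, A.nonempty.image f⟩

/-- The hyperspace `C(X)` of subcontinua (nonempty closed connected subsets) of `X`. -/
abbrev Subcontinua (X : Type*) [TopologicalSpace X] :=
  {A : NonemptyCompacts X // IsConnected (A : Set X)}

/-- The induced map `C(f)` on the hyperspace of subcontinua. -/
noncomputable def inducedC {X : Type*} [TopologicalSpace X] (f : X → X) (hf : Continuous f) :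
    Subcontinua X → Subcontinua X :=
  fun A => ⟨induced2 f hf A.1, A.2.image f hf.continuousOn⟩

/-- The `k`-fold symmetric product `X^{*k}`: nonempty subsets of `X` with at most `k` points. -/
abbrev SymProd (X : Type*) [TopologicalSpace X] (k : ℕ) :=
  {A : NonemptyCompacts X // (A : Set X).Finite ∧ (A : Set X).ncard ≤ k}

/-- The induced map `f^{*k}` on the `k`-fold symmetric product. -/
noncomputable def inducedSym {X : Type*} [TopologicalSpace X] (f : X → X) (hf : Continuous f)
    (k : ℕ) : SymProd X k → SymProd X k :=
  fun A => ⟨induced2 f hf A.1, A.2.1.image f, le_trans (Set.ncard_image_le A.2.1) A.2.2⟩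

/-- Sets `U 0, …, U (L-1)` are mutually singular for `f`. -/
def MutuallySingularSets {X : Type*} [TopologicalSpace X] (f : X → X) {L : ℕ}
    (U : Fin L → Set X) : Prop :=
  ∀ M : ℕ, ∃ x : X, ∃ n : Fin L → ℕ, (∀ j, 1 ≤ n j ∧ f^[n j] x ∈ U j) ∧
    ∀ i j, i ≠ j → (M : ℤ) < |(n i : ℤ) - (n j : ℤ)|

/-- A finite set `S ⊆ X \ NW(f)` is singular: it consists of mutually singular points, i.e.
every family of respective neighbourhoods of its points is mutually singular. -/
def IsSingularSet {X : Type*} [TopologicalSpace X] (f : X → X) (S : Set X) : Prop :=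
  S.Finite ∧ (∀ x ∈ S, x ∉ nonWandering f) ∧
  ∀ (L : ℕ) (x : Fin L → X), Function.Injective x → Set.range x = S →
    ∀ U : Fin L → Set X, (∀ j, U j ∈ nhds (x j)) → MutuallySingularSets f U

/-- The set of codings of length-`n` orbit segments of points of `Y` relative to the family
`F`, where the letter `none` stands for `Y_∞ = Y \ ⋃ F`. -/
def codings {X : Type*} (f : X → X) {L : ℕ} (F : Fin L → Set X) (Y : Set X) (n : ℕ) :
    Set (Fin n → Option (Fin L)) :=
  {w | ∃ x ∈ Y, ∀ j : Fin n, match w j with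
    | some i => f^[(j : ℕ)] x ∈ F i
    | none => f^[(j : ℕ)] x ∈ Y \ ⋃ i, F i}

/-- The polynomial entropy of `f` on `Y` relative to the family `F`:
`limsup_n log #A_n(F;Y) / log n`. -/
noncomputable def polEntRel {X : Type*} (f : X → X) {L : ℕ} (F : Fin L → Set X) (Y : Set X) :
    ℝ≥0∞ :=
  Filter.atTop.limsup fun n : ℕ =>
    ENNReal.ofReal (Real.log ((codings f F Y n).ncard) / Real.log n)

/-- The circle is connected. -/
theorem circle_isConnected_univ : IsConnected (Set.univ : Set Circle) := by
  have hsurj : Function.Surjective Circle.exp := fun z => ⟨Complex.arg z, Circle.exp_arg z⟩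
  have : ConnectedSpace Circle :=
    { toPreconnectedSpace := ⟨by
        rw [← Set.image_univ_of_surjective hsurj]
        exact isPreconnected_univ.image _ Circle.exp.continuous.continuousOn⟩,
      toNonempty := ⟨1⟩ }
  exact isConnected_univ


section DynBasic
variable {X : Type*} [MetricSpace X] (f : X → X)

lemma dynDist_nonneg (n : ℕ) (x y : X) : 0 ≤ dynDist f n x y := NNReal.coe_nonneg _

lemma dynDist_self (n : ℕ) (x : X) : dynDist f n x x = 0 := by
  have : ((Finset.range n).sup fun k => nndist (f^[k] x) (f^[k] x)) = 0 := by
    simp [nndist_self]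
  simp [dynDist, this]

lemma dynDist_symm (n : ℕ) (x y : X) : dynDist f n x y = dynDist f n y x := by
  unfold dynDist
  congr 1
  exact Finset.sup_congr rfl fun k _ => nndist_comm _ _

lemma dist_le_dynDist {n k : ℕ} (hk : k < n) (x y : X) :
    dist (f^[k] x) (f^[k] y) ≤ dynDist f n x y := by
  have h := Finset.le_sup (f := fun k => nndist (f^[k] x) (f^[k] y))
    (Finset.mem_range.2 hk)
  have h2 := (NNReal.coe_le_coe).2 h
  rw [← coe_nndist]
  exact h2

lemma le_dynDist_of {n k : ℕ} (hk : k < n) {x y : X} {ε : ℝ}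
    (h : ε ≤ dist (f^[k] x) (f^[k] y)) : ε ≤ dynDist f n x y :=
  h.trans (dist_le_dynDist f hk x y)

lemma exists_of_le_dynDist {n : ℕ} {x y : X} {ε : ℝ} (hε : 0 < ε)
    (h : ε ≤ dynDist f n x y) : ∃ k < n, ε ≤ dist (f^[k] x) (f^[k] y) := by
  rcases Nat.eq_zero_or_pos n with hn | hn
  · exfalso
    have : dynDist f n x y = 0 := by simp [dynDist, hn]
    rw [this] at h; linarith
  · obtain ⟨k, hk, hsup⟩ := Finset.exists_mem_eq_sup (Finset.range n)
      (Finset.nonempty_range_iff.2 hn.ne') (fun k => nndist (f^[k] x) (f^[k] y))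
    refine ⟨k, Finset.mem_range.1 hk, ?_⟩
    rw [← coe_nndist]
    calc ε ≤ dynDist f n x y := h
    _ = _ := by rw [dynDist, hsup]

lemma dynDist_triangle (n : ℕ) (x y z : X) :
    dynDist f n x z ≤ dynDist f n x y + dynDist f n y z := by
  have h : ((Finset.range n).sup fun k => nndist (f^[k] x) (f^[k] z)) ≤
      ((Finset.range n).sup fun k => nndist (f^[k] x) (f^[k] y)) +
      ((Finset.range n).sup fun k => nndist (f^[k] y) (f^[k] z)) := by
    refine Finset.sup_le fun k hk => ?_
    exact le_trans (nndist_triangle _ (f^[k] y) _)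
      (add_le_add (Finset.le_sup (f := fun k => nndist (f^[k] x) (f^[k] y)) hk)
        (Finset.le_sup (f := fun k => nndist (f^[k] y) (f^[k] z)) hk))
  have := (NNReal.coe_le_coe).2 h
  simpa [dynDist, NNReal.coe_add] using this

lemma maxSep_le {Y : Set X} {n : ℕ} {ε : ℝ} {B : ℕ}
    (hB : ∀ E : Finset X, ↑E ⊆ Y → IsDynSeparated f n ε E → E.card ≤ B) :
    maxSep f Y n ε ≤ B := by
  refine csSup_le ⟨0, ∅, by simp, Finset.card_empty, by intro x hx; simp at hx⟩ ?_
  rintro m ⟨E, h1, rfl, h3⟩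
  exact hB E h1 h3

lemma le_maxSep {Y : Set X} {n : ℕ} {ε : ℝ} {B : ℕ}
    (hB : ∀ E : Finset X, ↑E ⊆ Y → IsDynSeparated f n ε E → E.card ≤ B)
    (E : Finset X) (hE : ↑E ⊆ Y) (hsep : IsDynSeparated f n ε E) :
    E.card ≤ maxSep f Y n ε := by
  refine le_csSup ⟨B, ?_⟩ ⟨E, hE, rfl, hsep⟩
  rintro m ⟨E', h1, rfl, h3⟩
  exact hB E' h1 h3

lemma maxSep_mem {Y : Set X} {n : ℕ} {ε : ℝ} {B : ℕ}
    (hB : ∀ E : Finset X, ↑E ⊆ Y → IsDynSeparated f n ε E → E.card ≤ B) :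
    ∃ E : Finset X, ↑E ⊆ Y ∧ E.card = maxSep f Y n ε ∧ IsDynSeparated f n ε E := by
  have hne : {m : ℕ | ∃ E : Finset X, ↑E ⊆ Y ∧ E.card = m ∧ IsDynSeparated f n ε E}.Nonempty :=
    ⟨0, ∅, by simp, Finset.card_empty, by intro x hx; simp at hx⟩
  have hbdd : BddAbove {m : ℕ | ∃ E : Finset X, ↑E ⊆ Y ∧ E.card = m ∧ IsDynSeparated f n ε E} := by
    refine ⟨B, ?_⟩
    rintro m ⟨E', h1, rfl, h3⟩
    exact hB E' h1 h3
  exact Nat.sSup_mem hne hbdd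

end DynBasic

abbrev II : Type := ↥unitInterval

noncomputable instance : ConditionallyCompleteLinearOrder II := by
  haveI : Fact ((0:ℝ) ≤ 1) := ⟨zero_le_one⟩; infer_instance

instance : Infinite II := Set.Icc.infinite (show (0:ℝ) < 1 by norm_num)

lemma II_dist_le_one (x y : II) : dist x y ≤ 1 := by
  rw [Subtype.dist_eq, Real.dist_eq, abs_le]
  constructor <;> [nlinarith [x.2.1, x.2.2, y.2.1, y.2.2]; nlinarith [x.2.1, x.2.2, y.2.1, y.2.2]]

lemma homeo_mono_or_anti (f : II ≃ₜ II) : StrictMono f ∨ StrictAnti f :=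
  f.continuous.strictMono_of_inj f.injective

lemma iterate_mono_or_anti (f : II ≃ₜ II) (k : ℕ) :
    Monotone ((⇑f)^[k]) ∨ Antitone ((⇑f)^[k]) := by
  induction k with
  | zero => left; exact monotone_id
  | succ k ih =>
    rw [Function.iterate_succ']
    rcases homeo_mono_or_anti f with hf | hf
    · rcases ih with h | h
      · exact Or.inl (hf.monotone.comp h)
      · exact Or.inr (hf.monotone.comp_antitone h)

    · rcases ih with h | h
      · exact Or.inr (hf.antitone.comp_monotone h)
      · exact Or.inl (hf.antitone.comp h)

lemma base_count (f : II ≃ₜ II) {n : ℕ} (hn : 1 ≤ n) {ε : ℝ} (hε : 0 < ε)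
    (E : Finset II) (hsep : IsDynSeparated (⇑f) n ε E) :
    E.card ≤ n * ⌈ε⁻¹⌉₊ + 1 := by
  set N := E.card with hN
  rcases Nat.eq_zero_or_pos N with h0 | hNpos
  · omega
  let σ := E.orderIsoOfFin rfl
  have hlt : ∀ i : ℕ, min i (N-1) < N := fun i => by omega
  set x : ℕ → II := fun i => (σ ⟨min i (N-1), hlt i⟩ : II) with hx
  have hxmono : Monotone x := by
    intro i j hij
    have h1 : (⟨min i (N-1), hlt i⟩ : Fin N) ≤ ⟨min j (N-1), hlt j⟩ := by
      rw [Fin.mk_le_mk]; omega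
    exact Subtype.coe_le_coe.2 (σ.monotone h1)
  have hxmem : ∀ i, x i ∈ E := fun i => (σ _).2
  have hxlt : ∀ i : ℕ, i + 1 ≤ N - 1 → x i < x (i+1) := by
    intro i hi
    have h1 : (⟨min i (N-1), hlt i⟩ : Fin N) < ⟨min (i+1) (N-1), hlt (i+1)⟩ := by
      rw [Fin.mk_lt_mk]; omega
    exact Subtype.coe_lt_coe.2 (σ.strictMono h1)
  have key : ∀ i : ℕ, ∃ k, k < n ∧
      (i + 1 ≤ N - 1 → ε ≤ dist ((⇑f)^[k] (x (i+1))) ((⇑f)^[k] (x i))) := by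
    intro i
    by_cases hi : i + 1 ≤ N - 1
    · have hne : x (i+1) ≠ x i := (hxlt i hi).ne'
      have hd := hsep _ (hxmem (i+1)) _ (hxmem i) hne
      obtain ⟨k, hk, hke⟩ := exists_of_le_dynDist (⇑f) hε hd
      exact ⟨k, hk, fun _ => hke⟩
    · exact ⟨0, hn, fun h => absurd h hi⟩
  choose K hK1 hK2 using key
  have hcount : (Finset.range (N-1)).card =
      ∑ k ∈ Finset.range n, ((Finset.range (N-1)).filter fun i => K i = k).card :=
    Finset.card_eq_sum_card_fiberwise (fun i _ => Finset.mem_range.2 (hK1 i))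
  have hfiber : ∀ k ∈ Finset.range n,
      ((Finset.range (N-1)).filter fun i => K i = k).card ≤ ⌈ε⁻¹⌉₊ := by
    intro k _
    set S := (Finset.range (N-1)).filter fun i => K i = k with hS
    set y : ℕ → ℝ := fun i => (((⇑f)^[k] (x i) : II) : ℝ) with hy
    have hy01 : ∀ i, y i ∈ Set.Icc (0:ℝ) 1 := fun i => ((⇑f)^[k] (x i)).2
    have hgap : ∀ i ∈ S, ε ≤ |y (i+1) - y i| := by
      intro i hi
      rw [hS, Finset.mem_filter, Finset.mem_range] at hi
      obtain ⟨hiN, hik⟩ := hi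
      have hd := hK2 i (by omega)
      rw [hik] at hd
      rwa [Subtype.dist_eq, Real.dist_eq] at hd
    have habs : ε * S.card ≤ 1 := by
      have hsum1 : ε * S.card ≤ ∑ i ∈ S, |y (i+1) - y i| := by
        calc ε * S.card = ∑ _i ∈ S, ε := by rw [Finset.sum_const, nsmul_eq_mul, mul_comm]
        _ ≤ _ := Finset.sum_le_sum hgap
      have hsum2 : ∑ i ∈ S, |y (i+1) - y i| ≤ ∑ i ∈ Finset.range (N-1), |y (i+1) - y i| :=
        Finset.sum_le_sum_of_subset_of_nonneg (Finset.filter_subset _ _)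
          (fun _ _ _ => abs_nonneg _)
      have hsum3 : ∑ i ∈ Finset.range (N-1), |y (i+1) - y i| ≤ 1 := by
        rcases iterate_mono_or_anti f k with hm | hm
        · have hmy : Monotone y := fun a b hab => Subtype.coe_le_coe.2 (hm (hxmono hab))
          have habs2 : ∀ i, |y (i+1) - y i| = y (i+1) - y i :=
            fun i => abs_of_nonneg (by linarith [hmy (Nat.le_succ i)])
          simp_rw [habs2]
          rw [Finset.sum_range_sub y]
          have h1 := (hy01 (N-1)).2
          have h2 := (hy01 0).1
          linarith
        · have hmy : Antitone y := fun a b hab => Subtype.coe_le_coe.2 (hm (hxmono hab))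
          have habs2 : ∀ i, |y (i+1) - y i| = y i - y (i+1) := fun i => by
            rw [abs_sub_comm]
            exact abs_of_nonneg (by linarith [hmy (Nat.le_succ i)])
          simp_rw [habs2]
          rw [Finset.sum_range_sub' y]
          have h1 := (hy01 0).2
          have h2 := (hy01 (N-1)).1
          linarith
      linarith
    have hcard : (S.card : ℝ) ≤ ε⁻¹ := by
      rw [inv_eq_one_div, le_div_iff₀ hε]
      linarith
    exact_mod_cast hcard.trans (Nat.le_ceil _)
  have hsum : N - 1 ≤ n * ⌈ε⁻¹⌉₊ := by
    have h1 : N - 1 = ∑ k ∈ Finset.range n,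
        ((Finset.range (N-1)).filter fun i => K i = k).card := by
      rw [← hcount, Finset.card_range]
    rw [h1]
    calc ∑ k ∈ Finset.range n, ((Finset.range (N-1)).filter fun i => K i = k).card
        ≤ ∑ _k ∈ Finset.range n, ⌈ε⁻¹⌉₊ := Finset.sum_le_sum hfiber
      _ = n * ⌈ε⁻¹⌉₊ := by rw [Finset.sum_const, Finset.card_range, smul_eq_mul]
  omega

section Hyper
variable (f : II ≃ₜ II)

noncomputable abbrev CF (f : II ≃ₜ II) : Subcontinua II → Subcontinua II :=
  inducedC ⇑f f.continuous

lemma CF_coe (A : Subcontinua II) : ((CF f A).1 : Set II) = ⇑f '' (A.1 : Set II) := rfl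

lemma CF_iter_coe (k : ℕ) (A : Subcontinua II) :
    (((CF f)^[k] A).1 : Set II) = (⇑f)^[k] '' (A.1 : Set II) := by
  induction k with
  | zero => simp
  | succ k ih =>
    rw [Function.iterate_succ_apply', CF_coe, ih, Function.iterate_succ']
    exact (Set.image_comp _ _ _).symm

lemma subcont_dist (A B : Subcontinua II) :
    dist A B = Metric.hausdorffDist (A.1 : Set II) (B.1 : Set II) := rfl

lemma dist_ge_of_point (A B : Subcontinua II) (p : II) (hp : p ∈ (B.1 : Set II)) {δ : ℝ}
    (h : ∀ q ∈ (A.1 : Set II), δ ≤ dist p q) : δ ≤ dist A B := by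
  have hA : (A.1 : Set II).Nonempty := A.1.nonempty
  have hfin : EMetric.hausdorffEdist (B.1 : Set II) (A.1 : Set II) ≠ ⊤ :=
    Metric.hausdorffEdist_ne_top_of_nonempty_of_bounded B.1.nonempty hA
      Metric.isBounded_of_compactSpace Metric.isBounded_of_compactSpace
  have h1 : δ ≤ Metric.infDist p (A.1 : Set II) := by
    by_contra hlt
    push_neg at hlt
    obtain ⟨y, hy, hyd⟩ := (Metric.infDist_lt_iff hA).1 hlt
    exact absurd (h y hy) (by linarith)
  calc δ ≤ _ := h1
    _ ≤ Metric.hausdorffDist (B.1 : Set II) (A.1 : Set II) :=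
      Metric.infDist_le_hausdorffDist_of_mem hp hfin
    _ = dist A B := by rw [Metric.hausdorffDist_comm]; rfl

lemma Icc_hdist_key : ∀ a b c d : ℝ, a ≤ b → c ≤ d → ∀ x ∈ Set.Icc a b,
    ∃ y ∈ Set.Icc c d, dist x y ≤ max |a - c| |b - d| := by
  intro a b c d hab hcd x hx
  refine ⟨max c (min x d), ⟨le_max_left _ _, max_le hcd (min_le_right _ _)⟩, ?_⟩
  rw [Real.dist_eq]
  rcases le_total x c with h1 | h1
  · have hm : min x d = x := min_eq_left (h1.trans hcd)
    rw [hm, max_eq_left h1]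
    have he : |x - c| = c - x := by
      rw [abs_sub_comm]; exact abs_of_nonneg (by linarith)
    rw [he]
    refine le_trans (by linarith [hx.1] : c - x ≤ c - a) (le_trans ?_ (le_max_left _ _))
    rw [abs_sub_comm]; exact le_abs_self _
  · rcases le_total x d with h2 | h2
    · have hm : min x d = x := min_eq_left h2
      rw [hm, max_eq_right h1]
      simpa using le_max_iff.2 (Or.inl (abs_nonneg _))
    · have hm : min x d = d := min_eq_right h2
      rw [hm, max_eq_right hcd]
      have he : |x - d| = x - d := abs_of_nonneg (by linarith)
      rw [he]
      exact le_trans (by linarith [hx.2] : x - d ≤ b - d)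
        (le_trans (le_abs_self _) (le_max_right _ _))

lemma Icc_hdist_le {a b c d : ℝ} (hab : a ≤ b) (hcd : c ≤ d) :
    Metric.hausdorffDist (Set.Icc a b) (Set.Icc c d) ≤ max |a - c| |b - d| := by
  refine Metric.hausdorffDist_le_of_mem_dist
    (le_trans (abs_nonneg _) (le_max_left _ _)) (Icc_hdist_key a b c d hab hcd) ?_
  intro y hy
  obtain ⟨x, hx, hxy⟩ := Icc_hdist_key c d a b hcd hab y hy
  refine ⟨x, hx, ?_⟩
  have heq : max |c - a| |d - b| = max |a - c| |b - d| := by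
    rw [abs_sub_comm c a, abs_sub_comm d b]
  rw [← heq]
  exact hxy

noncomputable def loA (A : Subcontinua II) : II :=
  (A.1.isCompact.exists_isLeast A.1.nonempty).choose

lemma loA_spec (A : Subcontinua II) : IsLeast (A.1 : Set II) (loA A) :=
  (A.1.isCompact.exists_isLeast A.1.nonempty).choose_spec

noncomputable def hiA (A : Subcontinua II) : II :=
  (A.1.isCompact.exists_isGreatest A.1.nonempty).choose

lemma hiA_spec (A : Subcontinua II) : IsGreatest (A.1 : Set II) (hiA A) :=
  (A.1.isCompact.exists_isGreatest A.1.nonempty).choose_spec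

lemma loA_le_hiA (A : Subcontinua II) : loA A ≤ hiA A :=
  (loA_spec A).2 (hiA_spec A).1

lemma isLeast_val_image {T : Set II} {p : II} (h : IsLeast T p) :
    IsLeast (((↑) : II → ℝ) '' T) (p : ℝ) := by
  constructor
  · exact Set.mem_image_of_mem _ h.1
  · rintro y ⟨q, hq, rfl⟩
    exact Subtype.coe_le_coe.2 (h.2 hq)

lemma isGreatest_val_image {T : Set II} {p : II} (h : IsGreatest T p) :
    IsGreatest (((↑) : II → ℝ) '' T) (p : ℝ) := by
  constructor
  · exact Set.mem_image_of_mem _ h.1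
  · rintro y ⟨q, hq, rfl⟩
    exact Subtype.coe_le_coe.2 (h.2 hq)

lemma CF_dist_le (k : ℕ) (A B : Subcontinua II) :
    dist ((CF f)^[k] A) ((CF f)^[k] B) ≤
      max (dist ((⇑f)^[k] (loA A)) ((⇑f)^[k] (loA B)))
        (dist ((⇑f)^[k] (hiA A)) ((⇑f)^[k] (hiA B))) := by
  have hφc : Continuous ((⇑f)^[k]) := f.continuous.iterate k
  have hIcc : ∀ C : Subcontinua II, ((↑) : II → ℝ) '' ((⇑f)^[k] '' (C.1 : Set II)) =
      Set.Icc (sInf (((↑) : II → ℝ) '' ((⇑f)^[k] '' (C.1 : Set II))))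
        (sSup (((↑) : II → ℝ) '' ((⇑f)^[k] '' (C.1 : Set II)))) := by
    intro C
    refine eq_Icc_of_connected_compact ?_ ?_
    · exact (C.2.image _ hφc.continuousOn).image _ continuous_subtype_val.continuousOn
    · exact (C.1.isCompact.image hφc).image continuous_subtype_val
  have hdist : dist ((CF f)^[k] A) ((CF f)^[k] B) =
      Metric.hausdorffDist (((↑) : II → ℝ) '' ((⇑f)^[k] '' (A.1 : Set II)))
        (((↑) : II → ℝ) '' ((⇑f)^[k] '' (B.1 : Set II))) := by
    rw [subcont_dist, CF_iter_coe, CF_iter_coe]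
    exact (Metric.hausdorffDist_image isometry_subtype_coe).symm
  have main : ∀ pA qA pB qB : II,
      IsLeast ((⇑f)^[k] '' (A.1 : Set II)) pA →
      IsGreatest ((⇑f)^[k] '' (A.1 : Set II)) qA →
      IsLeast ((⇑f)^[k] '' (B.1 : Set II)) pB →
      IsGreatest ((⇑f)^[k] '' (B.1 : Set II)) qB →
      dist ((CF f)^[k] A) ((CF f)^[k] B) ≤ max (dist pA pB) (dist qA qB) := by
    intro pA qA pB qB h1 h2 h3 h4
    rw [hdist]
    have e1 := (isLeast_val_image h1).csInf_eq
    have e2 := (isGreatest_val_image h2).csSup_eq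
    have e3 := (isLeast_val_image h3).csInf_eq
    have e4 := (isGreatest_val_image h4).csSup_eq
    have hSA : ((↑) : II → ℝ) '' ((⇑f)^[k] '' (A.1 : Set II)) = Set.Icc (pA : ℝ) (qA : ℝ) := by
      rw [hIcc A, e1, e2]
    have hSB : ((↑) : II → ℝ) '' ((⇑f)^[k] '' (B.1 : Set II)) = Set.Icc (pB : ℝ) (qB : ℝ) := by
      rw [hIcc B, e3, e4]
    rw [hSA, hSB]
    have hab : (pA : ℝ) ≤ qA := Subtype.coe_le_coe.2 (h1.2 h2.1)
    have hcd : (pB : ℝ) ≤ qB := Subtype.coe_le_coe.2 (h3.2 h4.1)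
    have := Icc_hdist_le hab hcd
    simpa [Subtype.dist_eq, Real.dist_eq] using this
  have mk_least : ∀ (C : Subcontinua II), Monotone ((⇑f)^[k]) →
      IsLeast ((⇑f)^[k] '' (C.1 : Set II)) ((⇑f)^[k] (loA C)) ∧
      IsGreatest ((⇑f)^[k] '' (C.1 : Set II)) ((⇑f)^[k] (hiA C)) := by
    intro C hm
    constructor
    · exact ⟨Set.mem_image_of_mem _ (loA_spec C).1, by
        rintro y ⟨q, hq, rfl⟩; exact hm ((loA_spec C).2 hq)⟩
    · exact ⟨Set.mem_image_of_mem _ (hiA_spec C).1, by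
        rintro y ⟨q, hq, rfl⟩; exact hm ((hiA_spec C).2 hq)⟩
  have mk_least' : ∀ (C : Subcontinua II), Antitone ((⇑f)^[k]) →
      IsLeast ((⇑f)^[k] '' (C.1 : Set II)) ((⇑f)^[k] (hiA C)) ∧
      IsGreatest ((⇑f)^[k] '' (C.1 : Set II)) ((⇑f)^[k] (loA C)) := by
    intro C hm
    constructor
    · exact ⟨Set.mem_image_of_mem _ (hiA_spec C).1, by
        rintro y ⟨q, hq, rfl⟩; exact hm ((hiA_spec C).2 hq)⟩
    · exact ⟨Set.mem_image_of_mem _ (loA_spec C).1, by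
        rintro y ⟨q, hq, rfl⟩; exact hm ((loA_spec C).2 hq)⟩
  rcases iterate_mono_or_anti f k with hm | hm
  · exact main _ _ _ _ (mk_least A hm).1 (mk_least A hm).2 (mk_least B hm).1 (mk_least B hm).2
  · have h := main _ _ _ _ (mk_least' A hm).1 (mk_least' A hm).2
      (mk_least' B hm).1 (mk_least' B hm).2
    rw [max_comm] at h
    exact h

lemma exists_maximal_span (f : II ≃ₜ II) {n : ℕ} (hn : 1 ≤ n) {ε : ℝ} (hε : 0 < ε) :
    ∃ G : Finset II, G.card = maxSep (⇑f) Set.univ n ε ∧ IsDynSeparated (⇑f) n ε G ∧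
      ∀ x : II, ∃ y ∈ G, dynDist (⇑f) n x y < ε := by
  have hB : ∀ E : Finset II, (↑E : Set II) ⊆ Set.univ → IsDynSeparated (⇑f) n ε E →
      E.card ≤ n * ⌈ε⁻¹⌉₊ + 1 := fun E _ hs => base_count f hn hε E hs
  obtain ⟨G, _, hG2, hG3⟩ := maxSep_mem (⇑f) hB
  refine ⟨G, hG2, hG3, ?_⟩
  intro x
  by_contra hc
  push_neg at hc
  have hxG : x ∉ G := by
    intro hx
    have := hc x hx
    rw [dynDist_self] at this
    linarith
  have hsep' : IsDynSeparated (⇑f) n ε (insert x G) := by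
    intro a ha b hb hab
    rcases Finset.mem_insert.1 ha with rfl | ha'
    · rcases Finset.mem_insert.1 hb with rfl | hb'
      · exact absurd rfl hab
      · exact hc b hb'
    · rcases Finset.mem_insert.1 hb with rfl | hb'
      · rw [dynDist_symm]; exact hc a ha'
      · exact hG3 a ha' b hb' hab
  have hcard : G.card + 1 ≤ maxSep (⇑f) Set.univ n ε := by
    have := le_maxSep (⇑f) hB (insert x G) (by simp) hsep'
    rwa [Finset.card_insert_of_notMem hxG] at this
  omega

lemma C_card_bound (f : II ≃ₜ II) {n : ℕ} (hn : 1 ≤ n) {ε : ℝ} (hε : 0 < ε)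
    (E : Finset (Subcontinua II)) (hsep : IsDynSeparated (CF f) n ε E) :
    E.card ≤ (n * ⌈(ε/2)⁻¹⌉₊ + 1) ^ 2 := by
  have hε2 : 0 < ε/2 := by linarith
  obtain ⟨G, hGcard, _, hGspan⟩ := exists_maximal_span f hn hε2
  choose ψ hψG hψd using hGspan
  have hinj : Set.InjOn (fun A => (ψ (loA A), ψ (hiA A))) ↑E := by
    intro A hA B hB heq
    by_contra hne
    have hd := hsep A hA B hB hne
    obtain ⟨k, hk, hke⟩ := exists_of_le_dynDist (CF f) hε hd
    have h2 : ε ≤ max (dist ((⇑f)^[k] (loA A)) ((⇑f)^[k] (loA B)))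
        (dist ((⇑f)^[k] (hiA A)) ((⇑f)^[k] (hiA B))) := le_trans hke (CF_dist_le f k A B)
    have hpl : ψ (loA A) = ψ (loA B) := congrArg Prod.fst heq
    have hph : ψ (hiA A) = ψ (hiA B) := congrArg Prod.snd heq
    have t1 : dynDist (⇑f) n (loA A) (loA B) < ε := by
      calc dynDist (⇑f) n (loA A) (loA B)
          ≤ dynDist (⇑f) n (loA A) (ψ (loA A)) + dynDist (⇑f) n (ψ (loA A)) (loA B) :=
            dynDist_triangle (⇑f) n _ _ _
        _ < ε/2 + ε/2 := by
            refine add_lt_add (hψd _) ?_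
            rw [hpl, dynDist_symm]
            exact hψd _
        _ = ε := by ring
    have t2 : dynDist (⇑f) n (hiA A) (hiA B) < ε := by
      calc dynDist (⇑f) n (hiA A) (hiA B)
          ≤ dynDist (⇑f) n (hiA A) (ψ (hiA A)) + dynDist (⇑f) n (ψ (hiA A)) (hiA B) :=
            dynDist_triangle (⇑f) n _ _ _
        _ < ε/2 + ε/2 := by
            refine add_lt_add (hψd _) ?_
            rw [hph, dynDist_symm]
            exact hψd _
        _ = ε := by ring
    rcases max_cases (dist ((⇑f)^[k] (loA A)) ((⇑f)^[k] (loA B)))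
        (dist ((⇑f)^[k] (hiA A)) ((⇑f)^[k] (hiA B))) with ⟨hmax, _⟩ | ⟨hmax, _⟩
    · rw [hmax] at h2
      have := dist_le_dynDist (⇑f) hk (loA A) (loA B)
      linarith
    · rw [hmax] at h2
      have := dist_le_dynDist (⇑f) hk (hiA A) (hiA B)
      linarith
  have hmap : ∀ A ∈ E, (fun A => (ψ (loA A), ψ (hiA A))) A ∈ G ×ˢ G :=
    fun A _ => Finset.mem_product.2 ⟨hψG _, hψG _⟩
  have hle := Finset.card_le_card_of_injOn _ hmap hinj
  have hGle : G.card ≤ n * ⌈(ε/2)⁻¹⌉₊ + 1 := by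
    rw [hGcard]
    exact maxSep_le (⇑f) (fun E' _ h3 => base_count f hn hε2 E' h3)
  calc E.card ≤ (G ×ˢ G).card := hle
    _ = G.card * G.card := Finset.card_product _ _
    _ ≤ (n * ⌈(ε/2)⁻¹⌉₊ + 1) ^ 2 := by
        rw [sq]
        exact Nat.mul_le_mul hGle hGle

lemma polEnt_CF_le_two (f : II ≃ₜ II) : polEnt (CF f) Set.univ ≤ 2 := by
  rw [polEnt]
  refine iSup₂_le fun ε hε => ?_
  set K := ⌈(ε/2)⁻¹⌉₊ with hK
  have hK1 : 1 ≤ K := Nat.one_le_ceil_iff.2 (by positivity)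
  set L : ℝ := Real.log (2 * K) with hL
  have hLpos : 0 ≤ L := Real.log_nonneg (by
    have h1 : (1:ℝ) ≤ K := by exact_mod_cast hK1
    linarith)
  have hbound : ∀ᶠ n : ℕ in atTop,
      ENNReal.ofReal (Real.log (maxSep (CF f) Set.univ n ε) / Real.log n) ≤
      ENNReal.ofReal (2 * L / Real.log n + 2) := by
    filter_upwards [eventually_ge_atTop 2] with n hn
    apply ENNReal.ofReal_le_ofReal
    have hn1 : (1:ℝ) < n := by exact_mod_cast Nat.lt_of_lt_of_le one_lt_two hn
    have hlogn : 0 < Real.log n := Real.log_pos hn1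
    have hsep_le : maxSep (CF f) Set.univ n ε ≤ (n*K+1)^2 :=
      maxSep_le _ (fun E _ h3 => C_card_bound f (by omega) hε E h3)
    have hnum : Real.log (maxSep (CF f) Set.univ n ε) ≤ 2 * L + 2 * Real.log n := by
      have hrhs : (0:ℝ) ≤ 2 * L + 2 * Real.log n := by positivity
      rcases Nat.eq_zero_or_pos (maxSep (CF f) Set.univ n ε) with h0 | hpos
      · rw [h0]; simpa using hrhs
      · have h2 : (maxSep (CF f) Set.univ n ε : ℝ) ≤ ((2*K*n : ℕ) : ℝ) ^ 2 := by
          have hKn : (n*K+1) ≤ 2*K*n := by nlinarith [hK1, hn]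
          have h3 := hsep_le.trans (Nat.pow_le_pow_left hKn 2)
          exact_mod_cast h3
        have hlog := Real.log_le_log (by exact_mod_cast hpos) h2
        rw [Real.log_pow] at hlog
        have hlogsplit : Real.log ((2*K*n : ℕ) : ℝ) = L + Real.log n := by
          rw [hL]
          push_cast
          rw [Real.log_mul (by positivity) (by positivity)]
        rw [hlogsplit] at hlog
        push_cast at hlog
        linarith
    calc Real.log (maxSep (CF f) Set.univ n ε) / Real.log n
        ≤ (2 * L + 2 * Real.log n) / Real.log n := by gcongr
      _ = 2 * L / Real.log n + 2 := by field_simp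
  have h1 : Tendsto (fun n : ℕ => Real.log n) atTop atTop :=
    Real.tendsto_log_atTop.comp tendsto_natCast_atTop_atTop
  have h2 : Tendsto (fun n : ℕ => 2 * L / Real.log n) atTop (nhds 0) :=
    Tendsto.div_atTop tendsto_const_nhds h1
  have htendR : Tendsto (fun n : ℕ => 2 * L / Real.log n + 2) atTop (nhds 2) := by
    simpa using h2.add (tendsto_const_nhds (x := (2:ℝ)))
  have htend : Tendsto (fun n : ℕ => ENNReal.ofReal (2 * L / Real.log n + 2)) atTop
      (nhds (ENNReal.ofReal 2)) := ENNReal.tendsto_ofReal htendR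
  calc Filter.atTop.limsup
        (fun n : ℕ => ENNReal.ofReal (Real.log (maxSep (CF f) Set.univ n ε) / Real.log n))
      ≤ Filter.atTop.limsup (fun n : ℕ => ENNReal.ofReal (2 * L / Real.log n + 2)) :=
        Filter.limsup_le_limsup hbound
    _ = ENNReal.ofReal 2 := htend.limsup_eq
    _ ≤ 2 := by simp

end Hyper

section Lower
variable (f : II ≃ₜ II)

noncomputable def gg (f : II ≃ₜ II) : II ≃ₜ II := f.trans f

lemma gg_apply (y : II) : gg f y = f (f y) := rfl

lemma gg_mono : StrictMono (gg f) := by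
  rcases homeo_mono_or_anti f with hf | hf
  · exact fun a b h => hf (hf h)
  · exact fun a b h => hf (hf h)

lemma gg_symm_mono : StrictMono ((gg f).symm) := by
  intro a b hab
  have h1 : gg f ((gg f).symm a) < gg f ((gg f).symm b) := by
    rw [Homeomorph.apply_symm_apply, Homeomorph.apply_symm_apply]
    exact hab
  exact (gg_mono f).lt_iff_lt.1 h1

lemma f_sq_iterate (k : ℕ) : (⇑f)^[2*k] = (⇑(gg f))^[k] := by
  rw [Function.iterate_mul]
  rfl

noncomputable def Wt (f : II ≃ₜ II) (x : II) : ℤ → II := fun m =>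
  if 0 ≤ m then (⇑(gg f))^[m.toNat] x else (⇑(gg f).symm)^[(-m).toNat] x

variable (x : II)

lemma Wt_zero : Wt f x 0 = x := by simp [Wt]

lemma Wt_succ (m : ℤ) : Wt f x (m + 1) = gg f (Wt f x m) := by
  rcases le_or_gt 0 m with hm | hm
  · have h1 : (0:ℤ) ≤ m + 1 := by omega
    have h2 : (m+1).toNat = m.toNat + 1 := by omega
    rw [Wt, Wt]
    simp only [hm, h1, if_pos]
    rw [h2, Function.iterate_succ_apply']
  · have h1 : ¬ (0:ℤ) ≤ m := by omega
    rcases eq_or_lt_of_le (by omega : m + 1 ≤ 0) with he | hlt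
    · -- m = -1
      have hm1 : m = -1 := by omega
      subst hm1
      rw [Wt, Wt]
      norm_num
    · have h2 : ¬ (0:ℤ) ≤ m + 1 := by omega
      obtain ⟨k, hk1, hk2⟩ : ∃ k : ℕ, (-m).toNat = k + 1 ∧ (-(m+1)).toNat = k :=
        ⟨(-(m+1)).toNat, by omega, rfl⟩
      rw [Wt, Wt]
      simp only [h1, h2, if_neg, not_false_iff]
      rw [hk1, Function.iterate_succ_apply', Homeomorph.apply_symm_apply, hk2]

lemma Wt_iter (k : ℕ) (m : ℤ) : (⇑(gg f))^[k] (Wt f x m) = Wt f x (m + k) := by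
  induction k with
  | zero => simp
  | succ k ih =>
    rw [Function.iterate_succ_apply', ih, ← Wt_succ]
    congr 1
    push_cast
    ring

lemma Wt_mono_or_anti (hx : gg f x ≠ x) :
    StrictMono (Wt f x) ∨ StrictAnti (Wt f x) := by
  have key : ∀ m : ℤ, (Wt f x m < Wt f x (m+1) ↔ Wt f x 0 < Wt f x 1) ∧
      (Wt f x (m+1) < Wt f x m ↔ Wt f x 1 < Wt f x 0) := by
    intro m
    induction m using Int.induction_on with
    | zero => exact ⟨Iff.rfl, Iff.rfl⟩
    | succ i ih =>
      have e1 : Wt f x ((i:ℤ)+1) = gg f (Wt f x (i:ℤ)) := Wt_succ f x _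
      have e2 : Wt f x ((i:ℤ)+1+1) = gg f (Wt f x ((i:ℤ)+1)) := Wt_succ f x _
      constructor
      · rw [e2, e1, (gg_mono f).lt_iff_lt, ← e1]
        exact ih.1
      · rw [e2, e1, (gg_mono f).lt_iff_lt, ← e1]
        exact ih.2
    | pred i ih =>
      have e1 : Wt f x (-(i:ℤ)-1+1) = gg f (Wt f x (-(i:ℤ)-1)) := Wt_succ f x _
      have e2 : Wt f x (-(i:ℤ)) = gg f (Wt f x (-(i:ℤ)-1)) := by
        have h := Wt_succ f x (-(i:ℤ)-1)
        rwa [show -(i:ℤ)-1+1 = -(i:ℤ) by ring] at h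
      have e3 : Wt f x (-(i:ℤ)+1) = gg f (Wt f x (-(i:ℤ))) := Wt_succ f x _
      constructor
      · have h := ih.1
        rw [e3, e2, (gg_mono f).lt_iff_lt, ← e2] at h
        rw [e1, ← e2]
        exact h
      · have h := ih.2
        rw [e3, e2, (gg_mono f).lt_iff_lt, ← e2] at h
        rw [e1, ← e2]
        exact h
  have hne : Wt f x 1 ≠ Wt f x 0 := by
    rw [show (1:ℤ) = 0 + 1 by ring, Wt_succ, Wt_zero]
    exact hx
  rcases lt_or_gt_of_ne hne with h | h
  · right
    refine strictAnti_int_of_succ_lt fun m => ?_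
    exact (key m).2.mpr h
  · left
    refine strictMono_int_of_lt_succ fun m => ?_
    exact (key m).1.mpr h

end Lower

section Family
variable (f : II ≃ₜ II) (x : II)

lemma uIcc_compact (a b : II) : IsCompact (Set.uIcc a b) := by
  rw [Set.uIcc]
  exact isClosed_Icc.isCompact

lemma uIcc_connected (a b : II) : IsConnected (Set.uIcc a b) :=
  ⟨⟨a, Set.left_mem_uIcc⟩, isPreconnected_uIcc⟩

noncomputable def JC (a b : II) : Subcontinua II :=
  ⟨⟨⟨Set.uIcc a b, uIcc_compact a b⟩, ⟨a, Set.left_mem_uIcc⟩⟩, uIcc_connected a b⟩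

lemma JC_coe (a b : II) : ((JC a b).1 : Set II) = Set.uIcc a b := rfl

lemma mono_mem_uIcc {φ : II → II} (hφ : Monotone φ) {a b y : II} (hy : y ∈ Set.uIcc a b) :
    φ y ∈ Set.uIcc (φ a) (φ b) := by
  rcases Set.mem_uIcc.1 hy with ⟨h1, h2⟩ | ⟨h1, h2⟩
  · exact Set.mem_uIcc.2 (Or.inl ⟨hφ h1, hφ h2⟩)
  · exact Set.mem_uIcc.2 (Or.inr ⟨hφ h1, hφ h2⟩)

/-- The core distance estimate. -/
lemma core_dist (hmono : StrictMono (Wt f x) ∨ StrictAnti (Wt f x)) (m a b : ℤ)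
    (h : (m ≤ -1 ∧ 0 ≤ a ∧ 0 ≤ b) ∨ (0 ≤ m ∧ a ≤ -1 ∧ b ≤ -1)) :
    ∀ y ∈ Set.uIcc (Wt f x a) (Wt f x b),
      dist (Wt f x 0) (Wt f x (-1)) ≤ dist (Wt f x m) y := by
  intro y hy
  rw [Subtype.dist_eq, Subtype.dist_eq, Real.dist_eq, Real.dist_eq]
  rcases hmono with hM | hM
  · have hm10 : Wt f x (-1) < Wt f x 0 := hM (by omega)
    rcases h with ⟨h1, h2, h3⟩ | ⟨h1, h2, h3⟩
    · -- point below, interval above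
      have hpt : Wt f x m ≤ Wt f x (-1) := hM.monotone (by omega)
      have ha0 : Wt f x 0 ≤ Wt f x a := hM.monotone (by omega)
      have hb0 : Wt f x 0 ≤ Wt f x b := hM.monotone (by omega)
      have hylb : Wt f x 0 ≤ y := by
        rcases Set.mem_uIcc.1 hy with ⟨hu, _⟩ | ⟨hu, _⟩
        · exact le_trans ha0 hu
        · exact le_trans hb0 hu
      have c1 : ((Wt f x m : II) : ℝ) ≤ ((Wt f x (-1) : II) : ℝ) := hpt
      have c2 : ((Wt f x (-1) : II) : ℝ) < ((Wt f x 0 : II) : ℝ) := hm10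
      have c3 : ((Wt f x 0 : II) : ℝ) ≤ (y : ℝ) := hylb
      rw [abs_of_pos (by linarith), abs_of_nonpos (by linarith)]
      linarith
    · -- point above, interval below
      have hpt : Wt f x 0 ≤ Wt f x m := hM.monotone (by omega)
      have ha0 : Wt f x a ≤ Wt f x (-1) := hM.monotone (by omega)
      have hb0 : Wt f x b ≤ Wt f x (-1) := hM.monotone (by omega)
      have hyub : y ≤ Wt f x (-1) := by
        rcases Set.mem_uIcc.1 hy with ⟨_, hu⟩ | ⟨_, hu⟩
        · exact le_trans hu hb0
        · exact le_trans hu ha0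
      have c1 : ((Wt f x 0 : II) : ℝ) ≤ ((Wt f x m : II) : ℝ) := hpt
      have c2 : ((Wt f x (-1) : II) : ℝ) < ((Wt f x 0 : II) : ℝ) := hm10
      have c3 : (y : ℝ) ≤ ((Wt f x (-1) : II) : ℝ) := hyub
      rw [abs_of_pos (by linarith), abs_of_nonneg (by linarith)]
      linarith
  · have hm10 : Wt f x 0 < Wt f x (-1) := hM (by omega)
    rcases h with ⟨h1, h2, h3⟩ | ⟨h1, h2, h3⟩
    · have hpt : Wt f x (-1) ≤ Wt f x m := hM.antitone (by omega)
      have ha0 : Wt f x a ≤ Wt f x 0 := hM.antitone (by omega)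
      have hb0 : Wt f x b ≤ Wt f x 0 := hM.antitone (by omega)
      have hyub : y ≤ Wt f x 0 := by
        rcases Set.mem_uIcc.1 hy with ⟨_, hu⟩ | ⟨_, hu⟩
        · exact le_trans hu hb0
        · exact le_trans hu ha0
      have c1 : ((Wt f x (-1) : II) : ℝ) ≤ ((Wt f x m : II) : ℝ) := hpt
      have c2 : ((Wt f x 0 : II) : ℝ) < ((Wt f x (-1) : II) : ℝ) := hm10
      have c3 : (y : ℝ) ≤ ((Wt f x 0 : II) : ℝ) := hyub
      rw [abs_of_neg (by linarith), abs_of_nonneg (by linarith)]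
      linarith
    · have hpt : Wt f x m ≤ Wt f x 0 := hM.antitone (by omega)
      have ha0 : Wt f x (-1) ≤ Wt f x a := hM.antitone (by omega)
      have hb0 : Wt f x (-1) ≤ Wt f x b := hM.antitone (by omega)
      have hylb : Wt f x (-1) ≤ y := by
        rcases Set.mem_uIcc.1 hy with ⟨hu, _⟩ | ⟨hu, _⟩
        · exact le_trans ha0 hu
        · exact le_trans hb0 hu
      have c1 : ((Wt f x m : II) : ℝ) ≤ ((Wt f x 0 : II) : ℝ) := hpt
      have c2 : ((Wt f x 0 : II) : ℝ) < ((Wt f x (-1) : II) : ℝ) := hm10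
      have c3 : ((Wt f x (-1) : II) : ℝ) ≤ (y : ℝ) := hylb
      rw [abs_of_neg (by linarith), abs_of_nonpos (by linarith)]
      linarith

end Family

section Sep
variable (f : II ≃ₜ II) (x : II)

lemma iterate_gg_monotone (k : ℕ) : Monotone ((⇑(gg f))^[k]) :=
  (gg_mono f).monotone.iterate k

lemma family_sep_ordered (hmono : StrictMono (Wt f x) ∨ StrictAnti (Wt f x))
    {n Q : ℕ} (hQ : 1 ≤ Q) (hn : 4*Q ≤ n)
    {i j i' j' : ℕ} (hi : i < Q) (hj : j < Q) (hi' : i' < Q) (hj' : j' < Q)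
    (hord : i < i' ∨ (i = i' ∧ j < j')) :
    dist (Wt f x 0) (Wt f x (-1)) ≤ dynDist (CF f) n
      (JC (Wt f x (-(i:ℤ))) (Wt f x (-((Q:ℤ) + j))))
      (JC (Wt f x (-(i':ℤ))) (Wt f x (-((Q:ℤ) + j')))) := by
  set δ := dist (Wt f x 0) (Wt f x (-1)) with hδ
  set A₁ := JC (Wt f x (-(i:ℤ))) (Wt f x (-((Q:ℤ) + j))) with hA₁
  set A₂ := JC (Wt f x (-(i':ℤ))) (Wt f x (-((Q:ℤ) + j'))) with hA₂
  rcases hord with hlt | ⟨rfl, hlt⟩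
  · -- case i < i', time k = 2*i
    have hk : 2*i < n := by omega
    apply le_dynDist_of (CF f) hk
    have hpt : Wt f x 0 ∈ (((CF f)^[2*i] A₁).1 : Set II) := by
      rw [CF_iter_coe, hA₁, JC_coe, f_sq_iterate]
      refine ⟨Wt f x (-(i:ℤ)), Set.left_mem_uIcc, ?_⟩
      rw [Wt_iter]
      norm_num
    have hint : ∀ q ∈ (((CF f)^[2*i] A₂).1 : Set II), δ ≤ dist (Wt f x 0) q := by
      intro q hq
      rw [CF_iter_coe, hA₂, JC_coe, f_sq_iterate] at hq
      obtain ⟨y, hy, rfl⟩ := hq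
      have hmem : (⇑(gg f))^[i] y ∈
          Set.uIcc (Wt f x (-(i':ℤ) + (i:ℤ))) (Wt f x (-((Q:ℤ) + j') + (i:ℤ))) := by
        have h1 := mono_mem_uIcc (iterate_gg_monotone f i) hy
        rwa [Wt_iter, Wt_iter] at h1
      have := core_dist f x hmono 0 (-(i':ℤ) + (i:ℤ)) (-((Q:ℤ) + j') + (i:ℤ))
        (Or.inr ⟨le_refl 0, by omega, by omega⟩) _ hmem
      rwa [Wt_zero] at this ⊢
    have h := dist_ge_of_point ((CF f)^[2*i] A₂) ((CF f)^[2*i] A₁) (Wt f x 0) hpt hint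
    rwa [dist_comm] at h
  · -- case i = i', j < j', time k = 2*(Q+j)
    have hk : 2*(Q+j) < n := by omega
    apply le_dynDist_of (CF f) hk
    have hpt : Wt f x ((j:ℤ) - (j':ℤ)) ∈ (((CF f)^[2*(Q+j)] A₂).1 : Set II) := by
      rw [CF_iter_coe, hA₂, JC_coe, f_sq_iterate]
      refine ⟨Wt f x (-((Q:ℤ) + j')), Set.right_mem_uIcc, ?_⟩
      rw [Wt_iter]
      congr 1
      push_cast
      ring
    have hint : ∀ q ∈ (((CF f)^[2*(Q+j)] A₁).1 : Set II),
        δ ≤ dist (Wt f x ((j:ℤ) - (j':ℤ))) q := by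
      intro q hq
      rw [CF_iter_coe, hA₁, JC_coe, f_sq_iterate] at hq
      obtain ⟨y, hy, rfl⟩ := hq
      have hmem : (⇑(gg f))^[Q+j] y ∈
          Set.uIcc (Wt f x (-(i:ℤ) + ((Q:ℤ)+j))) (Wt f x (-((Q:ℤ) + j) + ((Q:ℤ)+j))) := by
        have h1 := mono_mem_uIcc (iterate_gg_monotone f (Q+j)) hy
        rw [Wt_iter, Wt_iter] at h1
        convert h1 using 3 <;> push_cast <;> ring
      exact core_dist f x hmono ((j:ℤ) - (j':ℤ)) (-(i:ℤ) + ((Q:ℤ)+j)) (-((Q:ℤ)+j) + ((Q:ℤ)+j))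
        (Or.inl ⟨by omega, by omega, by omega⟩) _ hmem
    exact dist_ge_of_point ((CF f)^[2*(Q+j)] A₁) ((CF f)^[2*(Q+j)] A₂) _ hpt hint

lemma family_sep (hmono : StrictMono (Wt f x) ∨ StrictAnti (Wt f x))
    {n Q : ℕ} (hQ : 1 ≤ Q) (hn : 4*Q ≤ n)
    {i j i' j' : ℕ} (hi : i < Q) (hj : j < Q) (hi' : i' < Q) (hj' : j' < Q)
    (hne : (i, j) ≠ (i', j')) :
    dist (Wt f x 0) (Wt f x (-1)) ≤ dynDist (CF f) n
      (JC (Wt f x (-(i:ℤ))) (Wt f x (-((Q:ℤ) + j))))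
      (JC (Wt f x (-(i':ℤ))) (Wt f x (-((Q:ℤ) + j')))) := by
  rcases Nat.lt_trichotomy i i' with h | h | h
  · exact family_sep_ordered f x hmono hQ hn hi hj hi' hj' (Or.inl h)
  · subst h
    rcases Nat.lt_trichotomy j j' with h2 | h2 | h2
    · exact family_sep_ordered f x hmono hQ hn hi hj hi' hj' (Or.inr ⟨rfl, h2⟩)
    · exact absurd (by rw [h2]) hne
    · rw [dynDist_symm]
      exact family_sep_ordered f x hmono hQ hn hi' hj' hi hj (Or.inr ⟨rfl, h2⟩)
  · rw [dynDist_symm]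
    exact family_sep_ordered f x hmono hQ hn hi' hj' hi hj (Or.inl h)

end Sep

section Final
variable (f : II ≃ₜ II) (x : II)

lemma maxSep_CF_ge (hmono : StrictMono (Wt f x) ∨ StrictAnti (Wt f x))
    (hδ : 0 < dist (Wt f x 0) (Wt f x (-1)))
    {n : ℕ} (hn : 16 ≤ n) :
    (n/8)^2 ≤ maxSep (CF f) Set.univ n (dist (Wt f x 0) (Wt f x (-1))) := by
  classical
  set δ := dist (Wt f x 0) (Wt f x (-1)) with hδdef
  set Q := n / 8 with hQdef
  have hQ1 : 1 ≤ Q := by omega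
  have h4Q : 4*Q ≤ n := by omega
  set As : ℕ × ℕ → Subcontinua II :=
    fun p => JC (Wt f x (-(p.1:ℤ))) (Wt f x (-((Q:ℤ) + p.2))) with hAs
  set E : Finset (Subcontinua II) :=
    (Finset.range Q ×ˢ Finset.range Q).image As with hE
  have hpair : ∀ p ∈ Finset.range Q ×ˢ Finset.range Q, ∀ p' ∈ Finset.range Q ×ˢ Finset.range Q,
      p ≠ p' → δ ≤ dynDist (CF f) n (As p) (As p') := by
    rintro ⟨i, j⟩ hp ⟨i', j'⟩ hp' hne
    rw [Finset.mem_product, Finset.mem_range, Finset.mem_range] at hp hp'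
    exact family_sep f x hmono hQ1 h4Q hp.1 hp.2 hp'.1 hp'.2 hne
  have hinj : Set.InjOn As ↑(Finset.range Q ×ˢ Finset.range Q) := by
    intro p hp p' hp' heq
    by_contra hne
    have h1 := hpair p hp p' hp' hne
    rw [heq, dynDist_self] at h1
    linarith
  have hsep : IsDynSeparated (CF f) n δ E := by
    intro A hA B hB hAB
    rw [hE, Finset.mem_image] at hA hB
    obtain ⟨p, hp, rfl⟩ := hA
    obtain ⟨p', hp', rfl⟩ := hB
    exact hpair p hp p' hp' (fun h => hAB (by rw [h]))
  have hcard : E.card = Q^2 := by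
    rw [hE, Finset.card_image_of_injOn hinj, Finset.card_product, Finset.card_range, sq]
  have hB : ∀ E' : Finset (Subcontinua II), (↑E' : Set (Subcontinua II)) ⊆ Set.univ →
      IsDynSeparated (CF f) n δ E' → E'.card ≤ (n * ⌈(δ/2)⁻¹⌉₊ + 1) ^ 2 :=
    fun E' _ h3 => C_card_bound f (by omega) hδ E' h3
  have := le_maxSep (CF f) hB E (by simp) hsep
  rwa [hcard] at this

lemma two_le_polEnt_CF (hmono : StrictMono (Wt f x) ∨ StrictAnti (Wt f x))
    (hδ : 0 < dist (Wt f x 0) (Wt f x (-1))) :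
    2 ≤ polEnt (CF f) Set.univ := by
  set δ := dist (Wt f x 0) (Wt f x (-1)) with hδdef
  rw [polEnt]
  have hkey : (2:ℝ≥0∞) ≤ Filter.atTop.limsup fun n : ℕ =>
      ENNReal.ofReal (Real.log (maxSep (CF f) Set.univ n δ) / Real.log n) := by
    have hev : ∀ᶠ n : ℕ in atTop,
        ENNReal.ofReal (2 - 2 * Real.log 16 / Real.log n) ≤
        ENNReal.ofReal (Real.log (maxSep (CF f) Set.univ n δ) / Real.log n) := by
      filter_upwards [eventually_ge_atTop 32] with n hn
      apply ENNReal.ofReal_le_ofReal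
      have hn16 : 16 ≤ n := by omega
      have hn1 : (1:ℝ) < n := by exact_mod_cast (by omega : 1 < n)
      have hlogn : 0 < Real.log n := Real.log_pos hn1
      have hQcast : (n:ℝ)/16 ≤ ((n/8 : ℕ) : ℝ) := by
        have h1 : n ≤ 16 * (n/8) := by omega
        have h2 : (n:ℝ) ≤ 16 * ((n/8 : ℕ) : ℝ) := by exact_mod_cast h1
        linarith
      have hQpos : (0:ℝ) < ((n/8:ℕ):ℝ) := by
        have : (0:ℝ) < (n:ℝ)/16 := by positivity
        linarith
      have hms := maxSep_CF_ge f x hmono hδ hn16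
      have hms' : (((n/8)^2 : ℕ) : ℝ) ≤ (maxSep (CF f) Set.univ n δ : ℝ) := by
        exact_mod_cast hms
      have hpos2 : (0:ℝ) < (((n/8)^2 : ℕ) : ℝ) := by
        push_cast
        positivity
      have hlog1 : Real.log (((n/8)^2 : ℕ) : ℝ) ≤
          Real.log (maxSep (CF f) Set.univ n δ) := Real.log_le_log hpos2 hms'
      have hlog2 : 2 * Real.log ((n:ℝ)/16) ≤ Real.log (((n/8)^2 : ℕ) : ℝ) := by
        have h3 : Real.log ((n:ℝ)/16) ≤ Real.log ((n/8:ℕ):ℝ) :=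
          Real.log_le_log (by positivity) hQcast
        have h4 : Real.log (((n/8)^2 : ℕ) : ℝ) = 2 * Real.log ((n/8:ℕ):ℝ) := by
          push_cast
          rw [Real.log_pow]
          push_cast
          ring
        rw [h4]
        linarith
      have hlog3 : Real.log ((n:ℝ)/16) = Real.log n - Real.log 16 :=
        Real.log_div (by positivity) (by norm_num)
      have hnum : 2 * (Real.log n - Real.log 16) ≤
          Real.log (maxSep (CF f) Set.univ n δ) := by
        rw [← hlog3]
        linarith
      have heq2 : 2 - 2 * Real.log 16 / Real.log n =
          2 * (Real.log n - Real.log 16) / Real.log n := by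
        field_simp
      rw [heq2]
      gcongr
    have h1 : Tendsto (fun n : ℕ => Real.log n) atTop atTop :=
      Real.tendsto_log_atTop.comp tendsto_natCast_atTop_atTop
    have h2 : Tendsto (fun n : ℕ => 2 * Real.log 16 / Real.log n) atTop (nhds 0) :=
      Tendsto.div_atTop tendsto_const_nhds h1
    have htendR : Tendsto (fun n : ℕ => 2 - 2 * Real.log 16 / Real.log n) atTop (nhds 2) := by
      have := (tendsto_const_nhds (x := (2:ℝ)) (f := atTop (α := ℕ))).sub h2
      simpa using this
    have hlim := (ENNReal.tendsto_ofReal htendR).limsup_eq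
    calc (2:ℝ≥0∞) = ENNReal.ofReal 2 := by simp
      _ = Filter.atTop.limsup
          (fun n : ℕ => ENNReal.ofReal (2 - 2 * Real.log 16 / Real.log n)) := hlim.symm
      _ ≤ _ := Filter.limsup_le_limsup hev
  exact le_iSup₂_of_le δ hδ hkey

end Final

-- MORE

-- STATEMENT 0
theorem stmt0 (f : ↥unitInterval ≃ₜ ↥unitInterval) (hNW : (nonWandering ⇑f).Finite) :
    polEnt (inducedC ⇑f f.continuous) Set.univ = 2 := by
  obtain ⟨x, hxmem⟩ := ((Set.infinite_univ (α := II)).diff hNW).nonempty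
  have hxnw : x ∉ nonWandering ⇑f := hxmem.2
  have hgx : gg f x ≠ x := by
    intro heq
    apply hxnw
    intro U hU
    refine ⟨2, by norm_num, ⟨x, ?_, mem_of_mem_nhds hU⟩⟩
    refine ⟨x, mem_of_mem_nhds hU, ?_⟩
    show (⇑f)^[2] x = x
    calc (⇑f)^[2] x = f (f x) := by
          rw [Function.iterate_succ_apply', Function.iterate_one]
      _ = gg f x := rfl
      _ = x := heq
  have hmono := Wt_mono_or_anti f x hgx
  have hδ : 0 < dist (Wt f x 0) (Wt f x (-1)) := by
    rw [dist_pos]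
    rcases hmono with hM | hM
    · exact fun h => absurd (hM.injective h) (by norm_num)
    · exact fun h => absurd (hM.injective h) (by norm_num)
  exact le_antisymm (polEnt_CF_le_two f) (two_le_polEnt_CF f x hmono hδ)
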